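/- Let F be a field of characteristic ≠ 2, V a 2-dimensional F-vector space, and q : V → F a non-degenerate quadratic form that represents 1 (i.e. q(v₀) = 1 for some v₀ ∈ V). Fix a basis of V and let d ∈ F∗ be the determinant of the Gram matrix of the symmetric bilinear form (1/2)·b_q in that basis. Then for a ∈ F with a ≠ 0, there exist u, v ∈ V with q(u) = 1, q(v) = 1 and q(u + v) = a if and only if d·(4a − a²) is a square in F. -/

import Mathlib

open QuadraticMap Module

/-- Let `q` be a 2-dimensional non-degenerate quadratic form over a field of characteristic
`≠ 2` representing `1`, with determinant `d` (the determinant of the Gram matrix of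
`(1/2)·b_q` in a fixed basis). For `a ≠ 0` there exist `u, v` with `q u = q v = 1` and
`q (u + v) = a` iff `d * (4a - a²)` is a square. -/
theorem stmt_11 {F V : Type*} [Field F] (hchar : ringChar F ≠ 2)
    [AddCommGroup V] [Module F V]
    (q : QuadraticForm F V)
    (hnd : ∀ x : V, (∀ y : V, polar (⇑q) x y = 0) → x = 0)
    (bV : Basis (Fin 2) F V)
    (hrep : ∃ v₀ : V, q v₀ = 1)
    (d : F) (hd : d = (Matrix.of fun i j => (1 / 2 : F) * polar (⇑q) (bV i) (bV j)).det)
    (a : F) (ha : a ≠ 0) :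
    (∃ u v : V, q u = 1 ∧ q v = 1 ∧ q (u + v) = a) ↔ IsSquare (d * (4 * a - a ^ 2)) := by
  classical
  have h2 : (2 : F) ≠ 0 := Ring.two_ne_zero hchar
  have h4 : (4 : F) ≠ 0 := by
    intro h
    exact h2 (by have : (2 : F) * 2 = 4 := by norm_num
                 exact mul_self_eq_zero.mp (this.trans h))
  have hfr : finrank F V = 2 := by
    rw [finrank_eq_card_basis bV]; simp
  have hMF : Module.Finite F V := Module.Finite.of_basis bV
  set Bp : LinearMap.BilinForm F V := q.polarBilin with hBpdef
  have key : ∀ x y : V, Bp x y = polar (⇑q) x y := fun _ _ => rfl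
  -- expansion lemma
  have hexp : ∀ (s t : F) (x y : V), q (s • x + t • y)
      = s ^ 2 * q x + t ^ 2 * q y + s * t * polar (⇑q) x y := by
    intro s t x y
    have h1 : q (s • x + t • y)
        = q (s • x) + q (t • y) + polar (⇑q) (s • x) (t • y) := by
      simp only [polar]; ring
    rw [h1, polar_smul_left, polar_smul_right, q.map_smul, q.map_smul]
    simp only [smul_eq_mul]; ring
  -- determinant of the Gram matrix in basis bV
  have hdM : 4 * d = (LinearMap.BilinForm.toMatrix bV Bp).det := by
    rw [hd, Matrix.det_fin_two, Matrix.det_fin_two]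
    simp only [Matrix.of_apply, LinearMap.BilinForm.toMatrix_apply, key]
    field_simp
    ring
  constructor
  · rintro ⟨u, v, hu, hv, huv⟩
    by_cases h4a : a = 4
    · exact ⟨0, by rw [h4a]; ring⟩
    have haa : 4 * a - a ^ 2 ≠ 0 := by
      intro h
      have : a * (4 - a) = 0 := by linear_combination h
      rcases mul_eq_zero.mp this with h' | h'
      · exact ha h'
      · exact h4a (sub_eq_zero.mp h').symm
    have hpuv : polar (⇑q) u v = a - 2 := by
      have : q (u + v) = q u + q v + polar (⇑q) u v := by simp only [polar]; ring
      rw [huv, hu, hv] at this; linear_combination -this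
    have hpuu : polar (⇑q) u u = 2 := by
      rw [polar_self, hu]; simp
    have hpvv : polar (⇑q) v v = 2 := by
      rw [polar_self, hv]; simp
    have hpvu : polar (⇑q) v u = a - 2 := by rw [polar_comm]; exact hpuv
    -- linear independence
    have hli : LinearIndependent F ![u, v] := by
      rw [LinearIndependent.pair_iff]
      intro s t hst
      have e1 : s * 2 + t * (a - 2) = 0 := by
        have := congrArg (fun z : V => Bp z u) hst
        simpa [key, hpuu, hpvu, smul_eq_mul] using this
      have e2 : s * (a - 2) + t * 2 = 0 := by
        have := congrArg (fun z : V => Bp z v) hst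
        simpa [key, hpuv, hpvv, smul_eq_mul] using this
      have ht : t * (4 * a - a ^ 2) = 0 := by linear_combination 2 * e2 - (a - 2) * e1
      have ht0 : t = 0 := by
        rcases mul_eq_zero.mp ht with h | h
        · exact h
        · exact absurd h haa
      constructor
      · have hs2 : s * 2 = 0 := by rw [ht0] at e1; linear_combination e1
        exact (mul_eq_zero.mp hs2).resolve_right h2
      · exact ht0
    let b' : Basis (Fin 2) F V :=
      basisOfLinearIndependentOfCardEqFinrank hli (by simp [hfr])
    have hb'0 : b' 0 = u := by
      simp [b', coe_basisOfLinearIndependentOfCardEqFinrank]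
    have hb'1 : b' 1 = v := by
      simp [b', coe_basisOfLinearIndependentOfCardEqFinrank]
    have hdet' : (LinearMap.BilinForm.toMatrix b' Bp).det = 4 * a - a ^ 2 := by
      rw [Matrix.det_fin_two]
      simp only [LinearMap.BilinForm.toMatrix_apply, hb'0, hb'1, key, hpuu, hpvv, hpuv, hpvu]
      ring
    have hchg := BilinForm.toMatrix_mul_basis_toMatrix bV b' Bp
    have hdets : (bV.toMatrix b').det ^ 2 * (4 * d) = 4 * a - a ^ 2 := by
      have := congrArg Matrix.det hchg
      rw [Matrix.det_mul, Matrix.det_mul, Matrix.det_transpose] at this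
      rw [hdM, ← hdet', ← this]; ring
    exact ⟨2 * (bV.toMatrix b').det * d, by linear_combination (-d) * hdets⟩
  · rintro ⟨s, hs⟩
    obtain ⟨v₀, hv₀⟩ := hrep
    by_cases h4a : a = 4
    · refine ⟨v₀, v₀, hv₀, hv₀, ?_⟩
      have : v₀ + v₀ = (2 : F) • v₀ := (two_smul F v₀).symm
      rw [this, q.map_smul, hv₀, h4a]; norm_num
    have haa : 4 * a - a ^ 2 ≠ 0 := by
      intro h
      have : a * (4 - a) = 0 := by linear_combination h
      rcases mul_eq_zero.mp this with h' | h'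
      · exact ha h'
      · exact h4a (sub_eq_zero.mp h').symm
    have hpv₀ : polar (⇑q) v₀ v₀ = 2 := by rw [polar_self, hv₀]; simp
    -- find w orthogonal to v₀
    have hker : (LinearMap.ker (Bp v₀)) ≠ ⊥ := by
      intro h
      have hinj : Function.Injective (Bp v₀) := LinearMap.ker_eq_bot.mp h
      have := LinearMap.finrank_le_finrank_of_injective hinj
      rw [hfr, finrank_self] at this
      omega
    obtain ⟨w, hwk, hw0⟩ := Submodule.ne_bot_iff _ |>.mp hker
    have hwk' : polar (⇑q) v₀ w = 0 := hwk
    have hwk'' : polar (⇑q) w v₀ = 0 := by rw [polar_comm]; exact hwk'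
    set e : F := q w with hedef
    have hpww : polar (⇑q) w w = 2 * e := by rw [polar_self]; simp [hedef]
    -- independence of (v₀, w)
    have hli : LinearIndependent F ![v₀, w] := by
      rw [LinearIndependent.pair_iff]
      intro s' t' hst
      have e1 : s' * 2 = 0 := by
        have := congrArg (fun z : V => Bp v₀ z) hst
        simpa [key, hpv₀, hwk', smul_eq_mul] using this
      have hs0 : s' = 0 := (mul_eq_zero.mp e1).resolve_right h2
      rw [hs0, zero_smul, zero_add] at hst
      exact ⟨hs0, (smul_eq_zero.mp hst).resolve_right hw0⟩
    let b' : Basis (Fin 2) F V :=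
      basisOfLinearIndependentOfCardEqFinrank hli (by simp [hfr])
    have hb'0 : b' 0 = v₀ := by
      simp [b', coe_basisOfLinearIndependentOfCardEqFinrank]
    have hb'1 : b' 1 = w := by
      simp [b', coe_basisOfLinearIndependentOfCardEqFinrank]
    -- e ≠ 0
    have he : e ≠ 0 := by
      intro he0
      apply hw0
      apply hnd w
      intro y
      have hz : Bp w = 0 := by
        apply b'.ext
        intro i
        fin_cases i
        · simpa [hb'0, key] using hwk''
        · simp [hb'1, key, hpww, he0]
      have := LinearMap.congr_fun hz y
      simpa [key] using this
    -- determinant in basis b'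
    have hdet' : (LinearMap.BilinForm.toMatrix b' Bp).det = 4 * e := by
      rw [Matrix.det_fin_two]
      simp only [LinearMap.BilinForm.toMatrix_apply, hb'0, hb'1, key, hpv₀, hpww, hwk', hwk'']
      ring
    have hchg := BilinForm.toMatrix_mul_basis_toMatrix bV b' Bp
    set p : F := (bV.toMatrix b').det with hpdef
    have hdets : p ^ 2 * (4 * d) = 4 * e := by
      have := congrArg Matrix.det hchg
      rw [Matrix.det_mul, Matrix.det_mul, Matrix.det_transpose] at this
      rw [hdM, ← hdet', ← this, hpdef]; ring
    have hE : e = p ^ 2 * d := by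
      apply mul_left_cancel₀ h4
      linear_combination -hdets
    set t : F := (a - 2) / 2 with htdef
    set y : F := (p * s) / (2 * e) with hydef
    have hye : y ^ 2 * e = 1 - t ^ 2 := by
      rw [hydef, htdef]
      field_simp
      linear_combination (-p^2) * hs + (-(4*a - a^2)) * hE
    refine ⟨v₀, t • v₀ + y • w, hv₀, ?_, ?_⟩
    · rw [hexp t y v₀ w, hv₀, ← hedef, hwk']
      linear_combination hye
    · have hrw : v₀ + (t • v₀ + y • w) = (1 + t) • v₀ + y • w := by module
      rw [hrw, hexp (1 + t) y v₀ w, hv₀, ← hedef, hwk']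
      have ht2 : 2 * t = a - 2 := by rw [htdef]; field_simp
      linear_combination hye + ht2
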